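/- For n ≥ 1, n-th q-derivative of a product of two reciprocal infinite q-products: D_q^n { 1/((ax;q)_∞ (bx;q)_∞) } = (1/((ax;q)_∞(bx;q)_∞)) · sum_{k=0}^n [n choose k]_q a^k b^{n-k} (bx;q)_k, as an identity of formal power series/analytic functions in x for 0<|q|<1. -/

import Mathlib

/-- The q-shifted factorial `(c;q)_n = ∏_{j=0}^{n-1} (1 - c q^j)`. -/
noncomputable def qPoch (a q : ℂ) (n : ℕ) : ℂ := ∏ j ∈ Finset.range n, (1 - a * q ^ j)

/-- The Gaussian binomial coefficient. -/
noncomputable def qBinom (q : ℂ) (n k : ℕ) : ℂ := qPoch q q n / (qPoch q q k * qPoch q q (n - k))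

/-- The infinite q-shifted factorial `(c;q)_∞ = ∏_{j≥0} (1 - c q^j)`. -/
noncomputable def qPochInf (a q : ℂ) : ℂ := ∏' j : ℕ, (1 - a * q ^ j)

/-- The q-difference operator `D_q f(x) = (f(x) - f(qx))/x`. -/
noncomputable def Dq (q : ℂ) (f : ℂ → ℂ) : ℂ → ℂ := fun x => (f x - f (q * x)) / x

/-! ### Auxiliary material -/

lemma one_sub_ne {c : ℂ} (h : ‖c‖ < 1) : (1:ℂ) - c ≠ 0 := by
  intro h0
  rw [sub_eq_zero] at h0
  rw [← h0] at h
  simp at h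

lemma norm_mul_pow_lt {c q : ℂ} (hq : ‖q‖ < 1) (hc : ‖c‖ < 1) (j : ℕ) :
    ‖c * q ^ j‖ < 1 := by
  rw [norm_mul, norm_pow]
  have h1 : ‖q‖ ^ j ≤ 1 := pow_le_one₀ (norm_nonneg q) hq.le
  nlinarith [norm_nonneg c, pow_nonneg (norm_nonneg q) j]

lemma summable_log {c q : ℂ} (hq : ‖q‖ < 1) (hc : ‖c‖ < 1) :
    Summable (fun j : ℕ => Complex.log (1 - c * q ^ j)) := by
  apply Summable.of_norm
  have hK : ∀ j : ℕ, ‖Complex.log (1 - c * q ^ j)‖ ≤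
      (‖c‖ * (1 - ‖c‖)⁻¹ / 2 + 1) * (‖c‖ * ‖q‖ ^ j) := by
    intro j
    have hzle : ‖c * q ^ j‖ ≤ ‖c‖ := by
      rw [norm_mul, norm_pow]
      have h1 : ‖q‖ ^ j ≤ 1 := pow_le_one₀ (norm_nonneg q) hq.le
      nlinarith [norm_nonneg c, pow_nonneg (norm_nonneg q) j]
    have hz1 : ‖c * q ^ j‖ < 1 := lt_of_le_of_lt hzle hc
    have hb := Complex.norm_log_one_add_le (z := -(c * q ^ j)) (by rwa [norm_neg])
    rw [show (1:ℂ) + -(c * q ^ j) = 1 - c * q ^ j by ring, norm_neg] at hb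
    refine hb.trans ?_
    have h0 : (0:ℝ) ≤ ‖c * q ^ j‖ := norm_nonneg _
    have hinv : (1 - ‖c * q ^ j‖)⁻¹ ≤ (1 - ‖c‖)⁻¹ := by
      apply inv_anti₀ (by linarith) (by linarith)
    have hinv0 : (0:ℝ) ≤ (1 - ‖c * q ^ j‖)⁻¹ := by rw [inv_nonneg]; linarith
    have heq : ‖c * q ^ j‖ = ‖c‖ * ‖q‖ ^ j := by rw [norm_mul, norm_pow]
    rw [← heq]
    nlinarith [mul_le_mul hzle hinv hinv0 (norm_nonneg c), sq_nonneg ‖c * q ^ j‖,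
      norm_nonneg c]
  refine Summable.of_nonneg_of_le (fun j => norm_nonneg _) hK ?_
  exact ((summable_geometric_of_lt_one (norm_nonneg q) hq).mul_left _).mul_left _

lemma multipliable_qPoch {c q : ℂ} (hq : ‖q‖ < 1) (hc : ‖c‖ < 1) :
    Multipliable (fun j : ℕ => 1 - c * q ^ j) := by
  have hs := (summable_log hq hc (q := q) (c := c)).hasSum
  have hp := hs.cexp
  have hfun : (Complex.exp ∘ fun j : ℕ => Complex.log (1 - c * q ^ j)) =
      fun j : ℕ => 1 - c * q ^ j := by
    funext j
    exact Complex.exp_log (one_sub_ne (norm_mul_pow_lt hq hc j))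
  rw [hfun] at hp
  exact ⟨_, hp⟩

lemma qPochInf_shift {q : ℂ} (hq : ‖q‖ < 1) {c : ℂ} (hc : ‖c‖ < 1) :
    qPochInf c q = (1 - c) * qPochInf (c * q) q := by
  have hcq : ‖c * q‖ < 1 := by
    rw [norm_mul]; nlinarith [norm_nonneg c, norm_nonneg q]
  have hm : Multipliable (fun j : ℕ => 1 - c * q ^ (j + 1)) := by
    refine (multipliable_qPoch hq hcq).congr fun j => ?_
    rw [pow_succ']; ring_nf
  have h := tprod_eq_zero_mul' (M := ℂ) (f := fun j : ℕ => 1 - c * q ^ j) hm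
  simp only [pow_zero, mul_one] at h
  rw [qPochInf, h]
  congr 1
  rw [qPochInf]
  exact tprod_congr fun j => by rw [pow_succ']; ring_nf

/-- Auxiliary Gaussian binomial defined via the q-Pascal recursion. -/
noncomputable def Cq (q : ℂ) : ℕ → ℕ → ℂ
  | _, 0 => 1
  | 0, _ + 1 => 0
  | n + 1, k + 1 => Cq q n k + q ^ (k + 1) * Cq q n (k + 1)

@[simp] lemma Cq_zero (q : ℂ) (n : ℕ) : Cq q n 0 = 1 := by cases n <;> rfl
@[simp] lemma Cq_zero_succ (q : ℂ) (k : ℕ) : Cq q 0 (k + 1) = 0 := rfl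
lemma Cq_succ_succ (q : ℂ) (n k : ℕ) :
    Cq q (n + 1) (k + 1) = Cq q n k + q ^ (k + 1) * Cq q n (k + 1) := rfl

lemma Cq_eq_zero (q : ℂ) : ∀ {n k : ℕ}, n < k → Cq q n k = 0 := by
  intro n
  induction n with
  | zero => intro k hk; match k, hk with | (k+1), _ => rfl
  | succ n ih =>
    intro k hk
    match k, hk with
    | (k+1), hk =>
      rw [Cq_succ_succ, ih (by omega), ih (by omega)]
      ring

@[simp] lemma qPoch_zero (c q : ℂ) : qPoch c q 0 = 1 := by simp [qPoch]
lemma qPoch_succ (c q : ℂ) (n : ℕ) :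
    qPoch c q (n + 1) = qPoch c q n * (1 - c * q ^ n) := Finset.prod_range_succ _ _
lemma qPoch_succ' (c q : ℂ) (n : ℕ) :
    qPoch c q (n + 1) = (1 - c) * qPoch (c * q) q n := by
  rw [qPoch, Finset.prod_range_succ']
  simp only [pow_zero, mul_one]
  rw [mul_comm]
  congr 1
  refine Finset.prod_congr rfl fun j _ => ?_
  rw [pow_succ']; ring

lemma one_sub_q_pow_ne {q : ℂ} (hq : ‖q‖ < 1) (j : ℕ) : (1:ℂ) - q * q ^ j ≠ 0 := by
  apply one_sub_ne
  rw [norm_mul, norm_pow]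
  have h1 : ‖q‖ ^ j ≤ 1 := pow_le_one₀ (norm_nonneg q) hq.le
  nlinarith [norm_nonneg q, pow_nonneg (norm_nonneg q) j]

lemma qPoch_q_ne_zero {q : ℂ} (hq : ‖q‖ < 1) (n : ℕ) : qPoch q q n ≠ 0 := by
  rw [qPoch]
  exact Finset.prod_ne_zero_iff.2 fun j _ => one_sub_q_pow_ne hq j

/-- q-Pascal identity. -/
lemma qBinom_pascal {q : ℂ} (hq : ‖q‖ < 1) (k m : ℕ) :
    qBinom q (k + 1 + m + 1) (k + 1) =
      qBinom q (k + 1 + m) k + q ^ (k + 1) * qBinom q (k + 1 + m) (k + 1) := by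
  have e1 : k + 1 + m + 1 - (k + 1) = m + 1 := by omega
  have e2 : k + 1 + m - k = m + 1 := by omega
  have e3 : k + 1 + m - (k + 1) = m := by omega
  rw [qBinom, qBinom, qBinom, e1, e2, e3]
  rw [show k + 1 + m + 1 = (k + 1 + m) + 1 from rfl, qPoch_succ q q (k + 1 + m),
    qPoch_succ q q k, qPoch_succ q q m]
  have hk := one_sub_q_pow_ne hq k
  have hm' := one_sub_q_pow_ne hq m
  have hPk := qPoch_q_ne_zero hq k
  have hPm := qPoch_q_ne_zero hq m
  field_simp
  ring

lemma qBinom_self (q : ℂ) {n : ℕ} (hq : ‖q‖ < 1) : qBinom q n n = 1 := by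
  rw [qBinom, Nat.sub_self, qPoch_zero, mul_one, div_self (qPoch_q_ne_zero hq n)]

lemma qBinom_zero (q : ℂ) {n : ℕ} (hq : ‖q‖ < 1) : qBinom q n 0 = 1 := by
  rw [qBinom, Nat.sub_zero, qPoch_zero, one_mul, div_self (qPoch_q_ne_zero hq n)]

lemma Cq_eq_qBinom {q : ℂ} (hq : ‖q‖ < 1) : ∀ n k : ℕ, k ≤ n → Cq q n k = qBinom q n k := by
  intro n
  induction n with
  | zero =>
    intro k hk
    interval_cases k
    rw [Cq_zero, qBinom_zero q hq]
  | succ n ih =>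
    intro k hk
    match k with
    | 0 => rw [Cq_zero, qBinom_zero q hq]
    | (k + 1) =>
      rw [Cq_succ_succ]
      rcases Nat.lt_or_ge k n with h | h
      · obtain ⟨m, hm⟩ : ∃ m, n = k + 1 + m := ⟨n - (k + 1), by omega⟩
        subst hm
        rw [ih k (by omega), ih (k + 1) (by omega), qBinom_pascal hq]
      · have : k = n := by omega
        subst this
        rw [ih k le_rfl, Cq_eq_zero q (by omega), qBinom_self q hq, qBinom_self q hq]
        ring

lemma sum_core (q a b x : ℂ) (n : ℕ) :
    ∑ k ∈ Finset.range (n + 2), Cq q (n + 1) k * a ^ k * b ^ (n + 1 - k) * qPoch (b * x) q k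
    = ∑ k ∈ Finset.range (n + 1), Cq q n k * a ^ k * b ^ (n - k) *
        (a * qPoch (b * x) q (k + 1) + b * q ^ k * qPoch (b * x) q k) := by
  set P : ℕ → ℂ := fun k => qPoch (b * x) q k with hP
  have hP0 : P 0 = 1 := qPoch_zero _ _
  have hL : ∑ k ∈ Finset.range (n + 2), Cq q (n + 1) k * a ^ k * b ^ (n + 1 - k) * P k
      = (∑ k ∈ Finset.range (n + 1), Cq q n k * a ^ (k + 1) * b ^ (n - k) * P (k + 1)) +
        (b ^ (n + 1) +
          ∑ k ∈ Finset.range n, q ^ (k + 1) * Cq q n (k + 1) * a ^ (k + 1) * b ^ (n - k) * P (k + 1)) := by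
    rw [Finset.sum_range_succ']
    have h1 : ∀ k ∈ Finset.range (n + 1),
        Cq q (n + 1) (k + 1) * a ^ (k + 1) * b ^ (n + 1 - (k + 1)) * P (k + 1)
        = Cq q n k * a ^ (k + 1) * b ^ (n - k) * P (k + 1)
          + q ^ (k + 1) * Cq q n (k + 1) * a ^ (k + 1) * b ^ (n - k) * P (k + 1) := by
      intro k _
      rw [Cq_succ_succ, Nat.succ_sub_succ]
      ring
    rw [Finset.sum_congr rfl h1, Finset.sum_add_distrib]
    rw [Finset.sum_range_succ (fun k => q ^ (k + 1) * Cq q n (k + 1) * a ^ (k + 1) * b ^ (n - k) * P (k + 1))]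
    rw [Cq_eq_zero q (Nat.lt_succ_self n)]
    simp only [Cq_zero, pow_zero, one_mul, Nat.sub_zero, hP0, mul_one]
    ring
  rw [hL]
  have h2 : ∀ k ∈ Finset.range (n + 1),
      Cq q n k * a ^ k * b ^ (n - k) * (a * P (k + 1) + b * q ^ k * P k)
      = Cq q n k * a ^ (k + 1) * b ^ (n - k) * P (k + 1)
        + Cq q n k * a ^ k * b ^ (n - k) * (b * q ^ k) * P k := by
    intro k _
    ring
  rw [Finset.sum_congr rfl h2, Finset.sum_add_distrib]
  congr 1
  rw [Finset.sum_range_succ' (fun k => Cq q n k * a ^ k * b ^ (n - k) * (b * q ^ k) * P k)]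
  have h3 : ∀ k ∈ Finset.range n,
      Cq q n (k + 1) * a ^ (k + 1) * b ^ (n - (k + 1)) * (b * q ^ (k + 1)) * P (k + 1)
      = q ^ (k + 1) * Cq q n (k + 1) * a ^ (k + 1) * b ^ (n - k) * P (k + 1) := by
    intro k hk
    rw [Finset.mem_range] at hk
    have e : n - k = (n - (k + 1)) + 1 := by omega
    rw [e, pow_succ]
    ring
  rw [Finset.sum_congr rfl h3]
  simp only [Cq_zero, pow_zero, one_mul, Nat.sub_zero, hP0, mul_one]
  rw [pow_succ]
  ring

lemma qPoch_step (q a b x : ℂ) (k : ℕ) :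
    qPoch (b * x) q k - (1 - a * x) * (1 - b * x) * qPoch (b * (q * x)) q k
    = x * (a * qPoch (b * x) q (k + 1) + b * q ^ k * qPoch (b * x) q k) := by
  have h1 : (1 - b * x) * qPoch (b * (q * x)) q k = qPoch (b * x) q (k + 1) := by
    rw [qPoch_succ']
    congr 2
    ring
  rw [show (1 - a * x) * (1 - b * x) * qPoch (b * (q * x)) q k
      = (1 - a * x) * ((1 - b * x) * qPoch (b * (q * x)) q k) from by ring, h1,
    qPoch_succ]
  ring

lemma step_sum {q : ℂ} (hq : ‖q‖ < 1) (a b x : ℂ) (n : ℕ) :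
    (∑ k ∈ Finset.range (n + 1), qBinom q n k * a ^ k * b ^ (n - k) * qPoch (b * x) q k)
      - (1 - a * x) * (1 - b * x) *
        (∑ k ∈ Finset.range (n + 1), qBinom q n k * a ^ k * b ^ (n - k) * qPoch (b * (q * x)) q k)
    = x * ∑ k ∈ Finset.range (n + 2), qBinom q (n + 1) k * a ^ k * b ^ (n + 1 - k) * qPoch (b * x) q k := by
  have cb1 : ∀ (m : ℕ) (y : ℂ), ∑ k ∈ Finset.range (m + 1), qBinom q m k * a ^ k * b ^ (m - k) * qPoch (b * y) q k
      = ∑ k ∈ Finset.range (m + 1), Cq q m k * a ^ k * b ^ (m - k) * qPoch (b * y) q k := by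
    intro m y
    refine Finset.sum_congr rfl fun k hk => ?_
    rw [Finset.mem_range] at hk
    rw [Cq_eq_qBinom hq m k (by omega)]
  rw [cb1 n x, cb1 n (q * x), cb1 (n + 1) x, sum_core, Finset.mul_sum, Finset.mul_sum,
    ← Finset.sum_sub_distrib]
  refine Finset.sum_congr rfl fun k _ => ?_
  have hst := qPoch_step q a b x k
  calc Cq q n k * a ^ k * b ^ (n - k) * qPoch (b * x) q k -
        (1 - a * x) * (1 - b * x) * (Cq q n k * a ^ k * b ^ (n - k) * qPoch (b * (q * x)) q k)
      = Cq q n k * a ^ k * b ^ (n - k) *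
        (qPoch (b * x) q k - (1 - a * x) * (1 - b * x) * qPoch (b * (q * x)) q k) := by ring
    _ = Cq q n k * a ^ k * b ^ (n - k) *
        (x * (a * qPoch (b * x) q (k + 1) + b * q ^ k * qPoch (b * x) q k)) := by rw [hst]
    _ = x * (Cq q n k * a ^ k * b ^ (n - k) *
        (a * qPoch (b * x) q (k + 1) + b * q ^ k * qPoch (b * x) q k)) := by ring

lemma funcEq {q a b : ℂ} (hq : ‖q‖ < 1) {x : ℂ} (hax : ‖a * x‖ < 1) (hbx : ‖b * x‖ < 1) :
    1 / (qPochInf (a * (q * x)) q * qPochInf (b * (q * x)) q)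
    = 1 / (qPochInf (a * x) q * qPochInf (b * x) q) * ((1 - a * x) * (1 - b * x)) := by
  have hA : qPochInf (a * x) q = (1 - a * x) * qPochInf (a * (q * x)) q := by
    rw [qPochInf_shift hq hax]
    congr 2
    ring
  have hB : qPochInf (b * x) q = (1 - b * x) * qPochInf (b * (q * x)) q := by
    rw [qPochInf_shift hq hbx]
    congr 2
    ring
  have h1 : (1:ℂ) - a * x ≠ 0 := one_sub_ne hax
  have h2 : (1:ℂ) - b * x ≠ 0 := one_sub_ne hbx
  rw [hA, hB, div_mul_eq_mul_div, one_mul]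
  rw [show (1 - a * x) * qPochInf (a * (q * x)) q * ((1 - b * x) * qPochInf (b * (q * x)) q)
      = ((1 - a * x) * (1 - b * x)) * (qPochInf (a * (q * x)) q * qPochInf (b * (q * x)) q)
      from by ring]
  rw [show ((1:ℂ) - a * x) * (1 - b * x)
      = ((1 - a * x) * (1 - b * x)) * 1 from (mul_one _).symm]
  rw [show (((1 - a * x) * (1 - b * x)) * 1) * (qPochInf (a * (q * x)) q * qPochInf (b * (q * x)) q)
      = ((1 - a * x) * (1 - b * x)) * (qPochInf (a * (q * x)) q * qPochInf (b * (q * x)) q)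
      from by ring] -- keep denominator form
  rw [mul_div_mul_left _ _ (mul_ne_zero h1 h2)]

lemma key_lemma (q a b : ℂ) (hq0 : 0 < ‖q‖) (hq : ‖q‖ < 1) (n : ℕ) :
    ∀ x : ℂ, x ≠ 0 → ‖a * x‖ < 1 → ‖b * x‖ < 1 →
    (Dq q)^[n] (fun t => 1 / (qPochInf (a * t) q * qPochInf (b * t) q)) x =
      1 / (qPochInf (a * x) q * qPochInf (b * x) q) *
        ∑ k ∈ Finset.range (n + 1), qBinom q n k * a ^ k * b ^ (n - k) * qPoch (b * x) q k := by
  induction n with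
  | zero =>
    intro x hx hax hbx
    simp [Finset.sum_range_one, qBinom, qPoch]
  | succ n ih =>
    intro x hx hax hbx
    have hq0' : q ≠ 0 := by
      intro h; rw [h] at hq0; simp at hq0
    have hqx : q * x ≠ 0 := mul_ne_zero hq0' hx
    have haqx : ‖a * (q * x)‖ < 1 := by
      rw [show a * (q * x) = q * (a * x) from by ring, norm_mul]
      nlinarith [norm_nonneg (a * x), norm_nonneg q]
    have hbqx : ‖b * (q * x)‖ < 1 := by
      rw [show b * (q * x) = q * (b * x) from by ring, norm_mul]
      nlinarith [norm_nonneg (b * x), norm_nonneg q]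
    rw [Function.iterate_succ_apply']
    show ((Dq q)^[n] _ x - (Dq q)^[n] _ (q * x)) / x = _
    rw [ih x hx hax hbx, ih (q * x) hqx haqx hbqx, funcEq hq hax hbx]
    set F := 1 / (qPochInf (a * x) q * qPochInf (b * x) q) with hF
    set S1 := ∑ k ∈ Finset.range (n + 1), qBinom q n k * a ^ k * b ^ (n - k) * qPoch (b * x) q k with hS1
    set S2 := ∑ k ∈ Finset.range (n + 1), qBinom q n k * a ^ k * b ^ (n - k) * qPoch (b * (q * x)) q k with hS2
    set S3 := ∑ k ∈ Finset.range (n + 1 + 1), qBinom q (n + 1) k * a ^ k * b ^ (n + 1 - k) * qPoch (b * x) q k with hS3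
    have hs : S1 - (1 - a * x) * (1 - b * x) * S2 = x * S3 := step_sum hq a b x n
    calc (F * S1 - F * ((1 - a * x) * (1 - b * x)) * S2) / x
        = F * (S1 - (1 - a * x) * (1 - b * x) * S2) / x := by ring_nf
      _ = F * (x * S3) / x := by rw [hs]
      _ = F * S3 * x / x := by ring_nf
      _ = F * S3 := by rw [mul_div_cancel_right₀ _ hx]

theorem Dq_iter_double_reciprocal (q a b : ℂ) (hq0 : 0 < ‖q‖) (hq : ‖q‖ < 1) (n : ℕ)
    (hn : 1 ≤ n) (x : ℂ) (hx : x ≠ 0) (hax : ‖a * x‖ < 1) (hbx : ‖b * x‖ < 1) :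
    (Dq q)^[n] (fun t => 1 / (qPochInf (a * t) q * qPochInf (b * t) q)) x =
      1 / (qPochInf (a * x) q * qPochInf (b * x) q) *
        ∑ k ∈ Finset.range (n + 1),
          qBinom q n k * a ^ k * b ^ (n - k) * qPoch (b * x) q k := by
  exact key_lemma q a b hq0 hq n x hx hax hbx
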